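/- arXiv:1905.04214 — 3 statements merged into one kernel-verified Lean document; each statement's English description precedes it below -/
import Mathlib

section
/- Let X ⊆ ℝ^m be a nonempty closed convex set, let ω : X → ℝ be continuously differentiable and σ-strongly convex with σ > 0, and define the Bregman divergence ν(a,b) = ω(b) − ω(a) − ⟨∇ω(a), b − a⟩ for a, b ∈ X. Let y ∈ X, g ∈ ℝ^m, α > 0, and let x⁺ be a minimizer over u ∈ X of ⟨g, u⟩ + (1/α) ν(y, u). Then ‖x⁺ − y‖ ≤ (α/σ) ‖g‖. -/
open scoped RealInnerProductSpace

noncomputable section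

/-- **Proximal step bound.**  Let `X ⊆ ℝ^m` be nonempty closed convex, `ω : X → ℝ`
continuously differentiable and `σ`-strongly convex (`⟨∇ω(a) − ∇ω(b), a − b⟩ ≥ σ‖a−b‖²`
on `X`), with Bregman divergence `ν(a,b) = ω(b) − ω(a) − ⟨∇ω(a), b − a⟩`.  If `y ∈ X`,
`g ∈ ℝ^m`, `α > 0` and `x⁺` minimizes `⟨g,u⟩ + (1/α) ν(y,u)` over `u ∈ X`, then
`‖x⁺ − y‖ ≤ (α/σ) ‖g‖`. -/
theorem prox_step_bound {m : ℕ}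
    (X : Set (EuclideanSpace ℝ (Fin m)))
    (hXne : X.Nonempty) (hXclosed : IsClosed X) (hXconvex : Convex ℝ X)
    (w : EuclideanSpace ℝ (Fin m) → ℝ)
    (gradw : EuclideanSpace ℝ (Fin m) → EuclideanSpace ℝ (Fin m))
    (hgrad : ∀ a ∈ X, HasGradientAt w (gradw a) a)
    (hgradcont : ContinuousOn gradw X)
    (σ : ℝ) (hσ : 0 < σ)
    (hstrong : ∀ a ∈ X, ∀ b ∈ X, σ * ‖a - b‖ ^ 2 ≤ ⟪gradw a - gradw b, a - b⟫)
    (ν : EuclideanSpace ℝ (Fin m) → EuclideanSpace ℝ (Fin m) → ℝ)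
    (hν : ∀ a b, ν a b = w b - w a - ⟪gradw a, b - a⟫)
    (y : EuclideanSpace ℝ (Fin m)) (hy : y ∈ X)
    (g : EuclideanSpace ℝ (Fin m)) (α : ℝ) (hα : 0 < α)
    (xp : EuclideanSpace ℝ (Fin m)) (hxpX : xp ∈ X)
    (hxpmin : ∀ u ∈ X, ⟪g, xp⟫ + (1 / α) * ν y xp ≤ ⟪g, u⟫ + (1 / α) * ν y u) :
    ‖xp - y‖ ≤ α / σ * ‖g‖ := by
  set d : EuclideanSpace ℝ (Fin m) := y - xp with hd
  -- the objective along the segment from xp to y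
  set φ : ℝ → ℝ := fun t => ⟪g, xp + t • d⟫ + (1 / α) * ν y (xp + t • d) with hφ
  -- membership of segment points
  have hmem : ∀ t ∈ Set.Icc (0:ℝ) 1, xp + t • d ∈ X := by
    intro t ht
    have : xp + t • d = (1 - t) • xp + t • y := by
      rw [hd]; module
    rw [this]
    exact hXconvex hxpX hy (by linarith [ht.1, ht.2]) ht.1 (by ring)
  -- derivative of φ at 0
  have hline : HasDerivAt (fun t : ℝ => xp + t • d) d 0 := by
    simpa using ((hasDerivAt_id (0:ℝ)).smul_const d).const_add xp
  have hwcomp : HasDerivAt (fun t : ℝ => w (xp + t • d)) ⟪gradw xp, d⟫ 0 := by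
    have hF : HasFDerivAt w (InnerProductSpace.toDual ℝ _ (gradw xp)) xp :=
      (hgrad xp hxpX).hasFDerivAt
    have hF0 : HasFDerivAt w (InnerProductSpace.toDual ℝ _ (gradw xp)) (xp + (0:ℝ) • d) := by
      simpa using hF
    have h := hF0.comp_hasDerivAt 0 hline
    simp at h
    exact h
  have hinner1 : HasDerivAt (fun t : ℝ => ⟪g, xp + t • d⟫) ⟪g, d⟫ 0 := by
    have : (fun t : ℝ => ⟪g, xp + t • d⟫) = fun t : ℝ => ⟪g, xp⟫ + t * ⟪g, d⟫ := by
      funext t; simp only [inner_add_right, real_inner_smul_right]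
    rw [this]
    simpa using ((hasDerivAt_id (0:ℝ)).mul_const ⟪g, d⟫).const_add ⟪g, xp⟫
  have hinner2 : HasDerivAt (fun t : ℝ => ⟪gradw y, xp + t • d - y⟫) ⟪gradw y, d⟫ 0 := by
    have : (fun t : ℝ => ⟪gradw y, xp + t • d - y⟫)
        = fun t : ℝ => ⟪gradw y, xp - y⟫ + t * ⟪gradw y, d⟫ := by
      funext t
      have : xp + t • d - y = (xp - y) + t • d := by abel
      rw [this]
      simp only [inner_add_right, real_inner_smul_right]
    rw [this]
    simpa using ((hasDerivAt_id (0:ℝ)).mul_const ⟪gradw y, d⟫).const_add ⟪gradw y, xp - y⟫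
  have hφderiv : HasDerivAt φ (⟪g, d⟫ + (1 / α) * (⟪gradw xp, d⟫ - ⟪gradw y, d⟫)) 0 := by
    have hφ' : φ = fun t : ℝ => ⟪g, xp + t • d⟫
        + (1 / α) * ((w (xp + t • d) - w y) - ⟪gradw y, xp + t • d - y⟫) := by
      funext t; rw [hφ]; dsimp only; rw [hν]
    rw [hφ']
    exact hinner1.add ((((hwcomp.sub_const (w y)).sub hinner2).const_mul (1 / α)))
  -- φ t ≥ φ 0 for t ∈ (0, 1]
  have hmin : ∀ t ∈ Set.Ioc (0:ℝ) 1, φ 0 ≤ φ t := by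
    intro t ht
    have h0 : φ 0 = ⟪g, xp⟫ + (1 / α) * ν y xp := by simp [hφ]
    rw [h0]
    exact hxpmin _ (hmem t ⟨le_of_lt ht.1, ht.2⟩)
  -- hence the derivative at 0 is nonnegative
  have hc : 0 ≤ ⟪g, d⟫ + (1 / α) * (⟪gradw xp, d⟫ - ⟪gradw y, d⟫) := by
    have htend := hasDerivAt_iff_tendsto_slope.mp hφderiv
    have htend' : Filter.Tendsto (slope φ 0) (nhdsWithin 0 (Set.Ioi 0))
        (nhds (⟪g, d⟫ + (1 / α) * (⟪gradw xp, d⟫ - ⟪gradw y, d⟫))) :=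
      htend.mono_left (nhdsWithin_mono 0 (fun x hx => ne_of_gt hx))
    refine ge_of_tendsto htend' ?_
    filter_upwards [Ioc_mem_nhdsGT_of_mem (Set.left_mem_Ico.mpr one_pos)] with t ht
    have h1 : 0 ≤ φ t - φ 0 := sub_nonneg.mpr (hmin t ht)
    have h2 : 0 < t := ht.1
    have hs : slope φ 0 t = (φ t - φ 0) / t := by
      rw [slope_def_field, sub_zero]
    rw [hs]
    exact div_nonneg h1 h2.le
  -- rearrange: σ‖xp - y‖² ≤ α ⟪g, y - xp⟫
  have hkey : ⟪gradw xp - gradw y, xp - y⟫ ≤ α * ⟪g, d⟫ := by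
    have hc2 : (⟪gradw y, d⟫ - ⟪gradw xp, d⟫) / α ≤ ⟪g, d⟫ := by
      have he : (1 / α) * (⟪gradw xp, d⟫ - ⟪gradw y, d⟫)
          = -((⟪gradw y, d⟫ - ⟪gradw xp, d⟫) / α) := by
        field_simp
        ring
      linarith [he ▸ hc]
    have h1 := (div_le_iff₀ hα).mp hc2
    have h2 : ⟪gradw xp - gradw y, xp - y⟫ = ⟪gradw y, d⟫ - ⟪gradw xp, d⟫ := by
      have hneg : ⟪gradw xp - gradw y, xp - y⟫ = ⟪gradw y - gradw xp, d⟫ := by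
        rw [hd, ← neg_sub (gradw y) (gradw xp), ← neg_sub y xp, inner_neg_neg]
      rw [hneg, inner_sub_left]
    rw [h2]
    linarith [h1]
  have hstrongxy := hstrong xp hxpX y hy
  have hCS : ⟪g, d⟫ ≤ ‖g‖ * ‖xp - y‖ := by
    have := real_inner_le_norm g d
    have : ‖d‖ = ‖xp - y‖ := by rw [hd, ← norm_neg]; congr 1; abel
    calc ⟪g, d⟫ ≤ ‖g‖ * ‖d‖ := real_inner_le_norm g d
      _ = ‖g‖ * ‖xp - y‖ := by rw [this]
  have hchain : σ * ‖xp - y‖ ^ 2 ≤ α * (‖g‖ * ‖xp - y‖) := by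
    calc σ * ‖xp - y‖ ^ 2 ≤ ⟪gradw xp - gradw y, xp - y⟫ := hstrongxy
      _ ≤ α * ⟪g, d⟫ := hkey
      _ ≤ α * (‖g‖ * ‖xp - y‖) := mul_le_mul_of_nonneg_left hCS (le_of_lt hα)
  rcases eq_or_lt_of_le (norm_nonneg (xp - y)) with h0 | h0
  · rw [← h0]
    positivity
  · rw [div_mul_eq_mul_div, le_div_iff₀ hσ]
    nlinarith [hchain]
end
end

section
/- Let X ⊆ ℝ^m be a nonempty closed convex set, let ω : X → ℝ be continuously differentiable and σ-strongly convex with σ > 0, and define the Bregman divergence ν(a,b) = ω(b) − ω(a) − ⟨∇ω(a), b − a⟩ for a, b ∈ X. Let y ∈ X, g ∈ ℝ^m, α > 0, and let x⁺ be a minimizer over u ∈ X of ⟨g, u⟩ + (1/α) ν(y, u). Then for every x* ∈ X, ν(x⁺, x*) ≤ ν(y, x*) − α ⟨g, y − x*⟩ + (α²/(2σ)) ‖g‖². -/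
open scoped RealInnerProductSpace

noncomputable section

/-- Bregman divergence lower bound from strong monotonicity of the gradient. -/
lemma bregman_lower_bound {m : ℕ}
    (X : Set (EuclideanSpace ℝ (Fin m))) (hXconvex : Convex ℝ X)
    (w : EuclideanSpace ℝ (Fin m) → ℝ)
    (gradw : EuclideanSpace ℝ (Fin m) → EuclideanSpace ℝ (Fin m))
    (hgrad : ∀ a ∈ X, HasGradientAt w (gradw a) a)
    (σ : ℝ)
    (hstrong : ∀ a ∈ X, ∀ b ∈ X, σ * ‖a - b‖ ^ 2 ≤ ⟪gradw a - gradw b, a - b⟫)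
    (a : EuclideanSpace ℝ (Fin m)) (ha : a ∈ X)
    (b : EuclideanSpace ℝ (Fin m)) (hb : b ∈ X) :
    σ / 2 * ‖b - a‖ ^ 2 ≤ w b - w a - ⟪gradw a, b - a⟫ := by
  set d := b - a with hd
  have hmem : ∀ t ∈ Set.Icc (0:ℝ) 1, a + t • d ∈ X := by
    intro t ht
    simpa using hXconvex.add_smul_sub_mem ha hb ht
  have hline : ∀ t : ℝ, HasDerivAt (fun t : ℝ => a + t • d) d t := by
    intro t
    simpa using ((hasDerivAt_id t).smul_const d).const_add a
  -- ψ t = w (a + t d) - t ⟪∇w a, d⟫ - σ t²/2 ‖d‖²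
  set ψ : ℝ → ℝ := fun t => w (a + t • d) - t * ⟪gradw a, d⟫ - σ * t ^ 2 / 2 * ‖d‖ ^ 2 with hψdef
  have hψderiv : ∀ t ∈ Set.Icc (0:ℝ) 1,
      HasDerivAt ψ (⟪gradw (a + t • d), d⟫ - ⟪gradw a, d⟫ - σ * t * ‖d‖ ^ 2) t := by
    intro t ht
    have h1 : HasDerivAt (fun t : ℝ => w (a + t • d)) (⟪gradw (a + t • d), d⟫) t := by
      have := (hgrad _ (hmem t ht)).hasFDerivAt.comp_hasDerivAt t (hline t)
      simpa [InnerProductSpace.toDual_apply_apply, Function.comp_def] using this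
    have h2 : HasDerivAt (fun t : ℝ => t * ⟪gradw a, d⟫) (⟪gradw a, d⟫) t := by
      simpa using (hasDerivAt_id t).mul_const (⟪gradw a, d⟫)
    have h3 : HasDerivAt (fun t : ℝ => σ * t ^ 2 / 2 * ‖d‖ ^ 2) (σ * t * ‖d‖ ^ 2) t := by
      have := (hasDerivAt_pow 2 t).const_mul σ
      have := (this.div_const 2).mul_const (‖d‖ ^ 2)
      refine this.congr_deriv ?_
      rw [show (2:ℕ) - 1 = 1 from rfl]
      push_cast
      ring
    exact (h1.sub h2).sub h3
  have hmono : MonotoneOn ψ (Set.Icc (0:ℝ) 1) := by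
    apply monotoneOn_of_deriv_nonneg (convex_Icc 0 1)
    · intro t ht
      exact (hψderiv t ht).continuousAt.continuousWithinAt
    · intro t ht
      rw [interior_Icc] at ht
      exact ((hψderiv t (Set.mem_Icc_of_Ioo ht)).differentiableAt).differentiableWithinAt
    · intro t ht
      rw [interior_Icc] at ht
      rw [(hψderiv t (Set.mem_Icc_of_Ioo ht)).deriv]
      have hX1 := hmem t (Set.mem_Icc_of_Ioo ht)
      have hs := hstrong _ hX1 a ha
      have hsub : a + t • d - a = t • d := by abel
      rw [hsub] at hs
      rw [inner_sub_left, real_inner_smul_right, real_inner_smul_right] at hs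
      have ht0 : 0 < t := ht.1
      have hnorm : ‖t • d‖ ^ 2 = t ^ 2 * ‖d‖ ^ 2 := by
        rw [norm_smul]
        simp [abs_of_pos ht0]
        ring
      rw [hnorm] at hs
      have : σ * t * ‖d‖ ^ 2 ≤ ⟪gradw (a + t • d), d⟫ - ⟪gradw a, d⟫ := by
        nlinarith
      linarith [this]
  have key := hmono (Set.left_mem_Icc.mpr zero_le_one) (Set.right_mem_Icc.mpr zero_le_one)
    zero_le_one
  have h0 : ψ 0 = w a := by simp [hψdef]
  have h1 : ψ 1 = w b - ⟪gradw a, d⟫ - σ / 2 * ‖d‖ ^ 2 := by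
    have hab : a + (1:ℝ) • d = b := by rw [hd]; simp
    simp only [hψdef, hab, one_pow, one_mul]
    ring
  rw [h0, h1] at key
  linarith

set_option maxHeartbeats 1000000 in
/-- **Proximal step descent inequality.**  Let `X ⊆ ℝ^m` be nonempty closed convex,
`ω : X → ℝ` continuously differentiable and `σ`-strongly convex
(`⟨∇ω(a) − ∇ω(b), a − b⟩ ≥ σ‖a−b‖²` on `X`), with Bregman divergence
`ν(a,b) = ω(b) − ω(a) − ⟨∇ω(a), b − a⟩`.  If `y ∈ X`, `g ∈ ℝ^m`, `α > 0` and `x⁺`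
minimizes `⟨g,u⟩ + (1/α) ν(y,u)` over `u ∈ X`, then for every `x* ∈ X`,
`ν(x⁺, x*) ≤ ν(y, x*) − α ⟨g, y − x*⟩ + (α²/(2σ)) ‖g‖²`. -/
theorem prox_step_descent {m : ℕ}
    (X : Set (EuclideanSpace ℝ (Fin m)))
    (hXne : X.Nonempty) (hXclosed : IsClosed X) (hXconvex : Convex ℝ X)
    (w : EuclideanSpace ℝ (Fin m) → ℝ)
    (gradw : EuclideanSpace ℝ (Fin m) → EuclideanSpace ℝ (Fin m))
    (hgrad : ∀ a ∈ X, HasGradientAt w (gradw a) a)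
    (hgradcont : ContinuousOn gradw X)
    (σ : ℝ) (hσ : 0 < σ)
    (hstrong : ∀ a ∈ X, ∀ b ∈ X, σ * ‖a - b‖ ^ 2 ≤ ⟪gradw a - gradw b, a - b⟫)
    (ν : EuclideanSpace ℝ (Fin m) → EuclideanSpace ℝ (Fin m) → ℝ)
    (hν : ∀ a b, ν a b = w b - w a - ⟪gradw a, b - a⟫)
    (y : EuclideanSpace ℝ (Fin m)) (hy : y ∈ X)
    (g : EuclideanSpace ℝ (Fin m)) (α : ℝ) (hα : 0 < α)
    (xp : EuclideanSpace ℝ (Fin m)) (hxpX : xp ∈ X)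
    (hxpmin : ∀ u ∈ X, ⟪g, xp⟫ + (1 / α) * ν y xp ≤ ⟪g, u⟫ + (1 / α) * ν y u) :
    ∀ xstar ∈ X, ν xp xstar ≤ ν y xstar - α * ⟪g, y - xstar⟫ + α ^ 2 / (2 * σ) * ‖g‖ ^ 2 := by
  intro xstar hxstar
  -- the objective function and its derivative at xp
  set F : EuclideanSpace ℝ (Fin m) → ℝ := fun v => ⟪g, v⟫ + (1 / α) * ν y v with hF
  -- F has Fréchet derivative L at xp
  set L : EuclideanSpace ℝ (Fin m) →L[ℝ] ℝ :=
    innerSL ℝ g + (1 / α) • (InnerProductSpace.toDual ℝ (EuclideanSpace ℝ (Fin m)) (gradw xp)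
      - innerSL ℝ (gradw y)) with hL
  have hFderiv : HasFDerivAt F L xp := by
    have h1 : HasFDerivAt (fun v : EuclideanSpace ℝ (Fin m) => ⟪g, v⟫) (innerSL ℝ g) xp :=
      (innerSL ℝ g).hasFDerivAt
    have h2 : HasFDerivAt w (InnerProductSpace.toDual ℝ (EuclideanSpace ℝ (Fin m)) (gradw xp))
        xp := hgrad xp hxpX
    have h3 : HasFDerivAt (fun v : EuclideanSpace ℝ (Fin m) => ⟪gradw y, v - y⟫)
        (innerSL ℝ (gradw y)) xp := by
      have heq : (fun v : EuclideanSpace ℝ (Fin m) => ⟪gradw y, v - y⟫)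
          = fun v : EuclideanSpace ℝ (Fin m) => ⟪gradw y, v⟫ - ⟪gradw y, y⟫ := by
        funext v; rw [inner_sub_right]
      rw [heq]
      exact ((innerSL ℝ (gradw y)).hasFDerivAt).sub_const _
    have h4 : HasFDerivAt (fun v => ν y v)
        (InnerProductSpace.toDual ℝ (EuclideanSpace ℝ (Fin m)) (gradw xp)
          - innerSL ℝ (gradw y)) xp := by
      have heq : (fun v => ν y v)
          = fun v : EuclideanSpace ℝ (Fin m) => w v - w y - ⟪gradw y, v - y⟫ := by
        funext v; rw [hν]
      rw [heq]
      exact (h2.sub_const (w y)).sub h3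
    have h5 := h1.add (h4.const_smul (1 / α))
    rw [hF, hL]
    exact h5
  -- first-order optimality
  have hopt : ∀ u ∈ X, 0 ≤ α * ⟪g, u - xp⟫ + ⟪gradw xp - gradw y, u - xp⟫ := by
    intro u hu
    have hmin : IsLocalMinOn F X xp :=
      (isMinOn_iff.mpr fun v hv => hxpmin v hv).localize
    have hcone : u - xp ∈ posTangentConeAt X xp :=
      sub_mem_posTangentConeAt_of_segment_subset (hXconvex.segment_subset hxpX hu)
    have h0 := hmin.hasFDerivWithinAt_nonneg hFderiv.hasFDerivWithinAt hcone
    have hLval : L (u - xp) = ⟪g, u - xp⟫ + (1 / α) * (⟪gradw xp, u - xp⟫ - ⟪gradw y, u - xp⟫) := by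
      simp [hL, InnerProductSpace.toDual_apply_apply]
    rw [hLval] at h0
    have := mul_nonneg (le_of_lt hα) h0
    rw [inner_sub_left]
    have hα' : α ≠ 0 := ne_of_gt hα
    calc (0:ℝ) ≤ α * (⟪g, u - xp⟫ + (1 / α) * (⟪gradw xp, u - xp⟫ - ⟪gradw y, u - xp⟫)) := this
      _ = α * ⟪g, u - xp⟫ + (⟪gradw xp, u - xp⟫ - ⟪gradw y, u - xp⟫) := by
          field_simp
  -- three-point identity
  have h3pt : ν xp xstar = ν y xstar - ν y xp - ⟪gradw xp - gradw y, xstar - xp⟫ := by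
    simp only [hν, inner_sub_left, inner_sub_right]
    ring
  -- Bregman lower bound
  have hbreg : σ / 2 * ‖xp - y‖ ^ 2 ≤ ν y xp := by
    rw [hν]
    exact bregman_lower_bound X hXconvex w gradw hgrad σ hstrong y hy xp hxpX
  -- Cauchy-Schwarz step
  have hCS : α * ⟪g, y - xp⟫ ≤ α * (‖g‖ * ‖y - xp‖) :=
    mul_le_mul_of_nonneg_left (real_inner_le_norm g (y - xp)) (le_of_lt hα)
  have hopt' := hopt xstar hxstar
  have hnormsym : ‖xp - y‖ = ‖y - xp‖ := norm_sub_rev _ _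
  have hinner : ⟪g, xstar - xp⟫ = ⟪g, y - xp⟫ - ⟪g, y - xstar⟫ := by
    rw [← inner_sub_right]
    congr 1
    abel
  -- put it together
  have hquad : α * (‖g‖ * ‖y - xp‖) - σ / 2 * ‖y - xp‖ ^ 2 ≤ α ^ 2 / (2 * σ) * ‖g‖ ^ 2 := by
    have h2σ : (0:ℝ) < 2 * σ := by linarith
    have h2 : 2 * σ * α * (‖g‖ * ‖y - xp‖) - σ * σ * ‖y - xp‖ ^ 2 ≤ α ^ 2 * ‖g‖ ^ 2 := by
      nlinarith [sq_nonneg (σ * ‖y - xp‖ - α * ‖g‖)]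
    calc α * (‖g‖ * ‖y - xp‖) - σ / 2 * ‖y - xp‖ ^ 2
        = (2 * σ * α * (‖g‖ * ‖y - xp‖) - σ * σ * ‖y - xp‖ ^ 2) / (2 * σ) := by
          field_simp
      _ ≤ α ^ 2 * ‖g‖ ^ 2 / (2 * σ) := by gcongr
      _ = α ^ 2 / (2 * σ) * ‖g‖ ^ 2 := by ring
  rw [h3pt]
  rw [hinner] at hopt'
  rw [hnormsym] at hbreg
  nlinarith [hopt', hbreg, hCS, hquad]
end
end

section
/- Let W ∈ ℝ^{N×N} be a row-stochastic matrix with w_ii ≥ η > 0 for all i, every nonzero off-diagonal entry w_ij ≥ η, and such that the directed graph induced by the nonzero off-diagonal entries of W is strongly connected. Let Π = diag(π_1, …, π_N) with π_i ∈ (0,1] for all i. Then the matrix Ŵ = I − Π + Π W is row-stochastic, satisfies Ŵ ≥ η I entrywise on the diagonal (i.e., Ŵ_ii ≥ η for all i), and Ŵ contains a δ-spanning tree for δ = η · min_i π_i. -/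
open Finset

noncomputable section

/-- A nonnegative matrix `A` contains a `δ`-spanning tree: in the directed graph with an
edge from `a` to `b` whenever `A a b ≥ δ` (the graph induced by `A_δ`), there is a vertex
`v` from which every vertex is reachable by a directed path. -/
def HasDeltaSpanningTree {N : ℕ} (A : Fin N → Fin N → ℝ) (δ : ℝ) : Prop :=
  ∃ v : Fin N, ∀ u : Fin N, Relation.ReflTransGen (fun a b => δ ≤ A a b) v u

/-- **Lazy consensus matrices keep a spanning tree.**
Let `W` be row stochastic with `w_ii ≥ η > 0`, every nonzero off-diagonal entry `≥ η`,
and the directed graph induced by the nonzero off-diagonal entries strongly connected.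
Let `Π = diag(π_1,…,π_N)` with `π_i ∈ (0,1]`.  Then `Ŵ = I − Π + Π W` is row
stochastic, has diagonal entries `≥ η`, and contains a `δ`-spanning tree for
`δ = η · min_i π_i`. -/
theorem lazy_consensus_spanning_tree
    {N : ℕ} [NeZero N] (W : Fin N → Fin N → ℝ) (η : ℝ) (hη : 0 < η)
    (hWnonneg : ∀ i j, 0 ≤ W i j)
    (hWrow : ∀ i, ∑ j, W i j = 1)
    (hWdiag : ∀ i, η ≤ W i i)
    (hWpos : ∀ i j, i ≠ j → W i j ≠ 0 → η ≤ W i j)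
    (hWconn : ∀ i j : Fin N,
      Relation.ReflTransGen (fun a b => a ≠ b ∧ W a b ≠ 0) i j)
    (π : Fin N → ℝ) (hπ : ∀ i, π i ∈ Set.Ioc (0 : ℝ) 1)
    (Wh : Fin N → Fin N → ℝ)
    (hWh : ∀ i j, Wh i j = (if i = j then 1 - π i else 0) + π i * W i j) :
    (∀ i j, 0 ≤ Wh i j) ∧ (∀ i, ∑ j, Wh i j = 1) ∧ (∀ i, η ≤ Wh i i) ∧
      HasDeltaSpanningTree Wh (η * ⨅ i, π i) := by
  have hπpos : ∀ i, 0 < π i := fun i => (hπ i).1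
  have hπle : ∀ i, π i ≤ 1 := fun i => (hπ i).2
  have hmin : ∀ i, (⨅ j, π j) ≤ π i := fun i =>
    ciInf_le (Set.Finite.bddBelow (Set.finite_range π)) i
  have i0 : Fin N := ⟨0, Nat.pos_of_ne_zero (NeZero.ne N)⟩
  have hη1 : η ≤ 1 := by
    have h1 : W i0 i0 ≤ ∑ j, W i0 j :=
      Finset.single_le_sum (fun j _ => hWnonneg i0 j) (Finset.mem_univ i0)
    have := hWdiag i0
    rw [hWrow i0] at h1
    linarith
  refine ⟨?_, ?_, ?_, ?_⟩
  · intro i j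
    rw [hWh]
    have h0 : 0 ≤ π i * W i j := mul_nonneg (hπpos i).le (hWnonneg i j)
    split
    · linarith [hπle i]
    · linarith
  · intro i
    simp only [hWh]
    rw [Finset.sum_add_distrib, Finset.sum_ite_eq Finset.univ i (fun _ => 1 - π i),
      ← Finset.mul_sum, hWrow i]
    simp
  · intro i
    rw [hWh]
    rw [if_pos rfl]
    have := hWdiag i
    nlinarith [hπpos i, hπle i]
  · refine ⟨i0, fun u => ?_⟩
    refine Relation.ReflTransGen.mono ?_ _ _ (hWconn i0 u)
    rintro a b ⟨hab, hne⟩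
    rw [hWh, if_neg hab]
    have h1 : η * (⨅ j, π j) ≤ η * π a :=
      mul_le_mul_of_nonneg_left (hmin a) hη.le
    have h2 : η * π a ≤ W a b * π a :=
      mul_le_mul_of_nonneg_right (hWpos a b hab hne) (hπpos a).le
    linarith [h2]
end
end
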